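/- If f is a skew-morphism of ℤ/nℤ whose order is coprime to n, then f is an automorphism of ℤ/nℤ, i.e., f(x+y) = f(x) + f(y) for all x, y. -/

import Mathlib

open Subgroup Equiv Pointwise

/-! ### Auxiliary group-theoretic machinery

We prove (a form of) Itô's theorem on products of two abelian subgroups, and
derive: if a finite group `G = A * C` with `A`, `C` abelian of coprime orders
and `C` has trivial normal core, then `A` is normal in `G`. -/

section Ito

variable {G : Type*} [Group G]

private lemma skew_aux1 (a x a₂ b₂ : G) (h1 : a * x = x * a) (h2 : a * a₂ = a₂ * a) :
    x⁻¹ * (a⁻¹ * (a₂ * b₂ * x⁻¹)⁻¹ * a * (a₂ * b₂ * x⁻¹)) * x = a⁻¹ * b₂⁻¹ * a * b₂ := by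
  have hx' : x⁻¹ * a⁻¹ * x = a⁻¹ := by
    have h1' : x⁻¹ * a⁻¹ = a⁻¹ * x⁻¹ := by rw [← mul_inv_rev, h1, mul_inv_rev]
    rw [h1', mul_assoc, inv_mul_cancel, mul_one]
  have ha₂' : a₂⁻¹ * a * a₂ = a := by rw [mul_assoc, h2, ← mul_assoc, inv_mul_cancel, one_mul]
  calc x⁻¹ * (a⁻¹ * (a₂ * b₂ * x⁻¹)⁻¹ * a * (a₂ * b₂ * x⁻¹)) * x
      = (x⁻¹ * a⁻¹ * x) * b₂⁻¹ * (a₂⁻¹ * a * a₂) * b₂ := by group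
    _ = a⁻¹ * b₂⁻¹ * a * b₂ := by rw [hx', ha₂']

private lemma skew_aux2 (b y a₂ b₂ : G) (h1 : b * y = y * b) (h2 : b * b₂ = b₂ * b) :
    y⁻¹ * ((b₂ * a₂ * y⁻¹)⁻¹ * b⁻¹ * (b₂ * a₂ * y⁻¹) * b) * y = a₂⁻¹ * b⁻¹ * a₂ * b := by
  have hy' : y⁻¹ * b * y = b := by
    rw [mul_assoc, h1, ← mul_assoc, inv_mul_cancel, one_mul]
  have hb₂' : b₂⁻¹ * b⁻¹ * b₂ = b⁻¹ := by
    have h2' : b⁻¹ * b₂ = b₂ * b⁻¹ := by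
      have := congrArg (fun z => b⁻¹ * z * b⁻¹) h2
      simpa [mul_assoc] using this.symm
    rw [mul_assoc, h2', ← mul_assoc, inv_mul_cancel, one_mul]
  calc y⁻¹ * ((b₂ * a₂ * y⁻¹)⁻¹ * b⁻¹ * (b₂ * a₂ * y⁻¹) * b) * y
      = a₂⁻¹ * (b₂⁻¹ * b⁻¹ * b₂) * a₂ * (y⁻¹ * b * y) := by group
    _ = a₂⁻¹ * b⁻¹ * a₂ * b := by rw [hy', hb₂']

variable (A B : Subgroup G)

/-- Conjugation by an element of `A` of a basic commutator changes only the `B`-entry. -/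
private lemma skew_rule1 (hA : ∀ a ∈ A, ∀ a' ∈ A, a * a' = a' * a)
    (hG : ∀ g : G, ∃ a ∈ A, ∃ b ∈ B, a * b = g) {x b : G} (hx : x ∈ A) (hb : b ∈ B) :
    ∃ b' ∈ B, ∀ a ∈ A, x⁻¹ * (a⁻¹ * b⁻¹ * a * b) * x = a⁻¹ * b'⁻¹ * a * b' := by
  obtain ⟨a₂, ha₂, b₂, hb₂, hd⟩ := hG (b * x)
  refine ⟨b₂, hb₂, fun a ha => ?_⟩
  have hbe : b = a₂ * b₂ * x⁻¹ := by rw [hd]; group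
  rw [hbe]
  exact skew_aux1 a x a₂ b₂ (hA a ha x hx) (hA a ha a₂ ha₂)

/-- Conjugation by an element of `B` of a basic commutator changes only the `A`-entry. -/
private lemma skew_rule2 (hB : ∀ b ∈ B, ∀ b' ∈ B, b * b' = b' * b)
    (hG' : ∀ g : G, ∃ b ∈ B, ∃ a ∈ A, b * a = g) {y a : G} (hy : y ∈ B) (ha : a ∈ A) :
    ∃ a' ∈ A, ∀ b ∈ B, y⁻¹ * (a⁻¹ * b⁻¹ * a * b) * y = a'⁻¹ * b⁻¹ * a' * b := by
  obtain ⟨b₂, hb₂, a₂, ha₂, hd⟩ := hG' (a * y)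
  refine ⟨a₂, ha₂, fun b hb => ?_⟩
  have hae : a = b₂ * a₂ * y⁻¹ := by rw [hd]; group
  rw [hae]
  exact skew_aux2 b y a₂ b₂ (hB b hb y hy) (hB b hb b₂ hb₂)

private lemma skew_hG' (hG : ∀ g : G, ∃ a ∈ A, ∃ b ∈ B, a * b = g) :
    ∀ g : G, ∃ b ∈ B, ∃ a ∈ A, b * a = g := by
  intro g
  obtain ⟨a, ha, b, hb, h⟩ := hG g⁻¹
  exact ⟨b⁻¹, inv_mem hb, a⁻¹, inv_mem ha, by rw [← mul_inv_rev, h, inv_inv]⟩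

/-- The heart of Itô's theorem : basic commutators pairwise commute. -/
private lemma skew_Scomm (hA : ∀ a ∈ A, ∀ a' ∈ A, a * a' = a' * a)
    (hB : ∀ b ∈ B, ∀ b' ∈ B, b * b' = b' * b)
    (hG : ∀ g : G, ∃ a ∈ A, ∃ b ∈ B, a * b = g)
    {a b c d : G} (ha : a ∈ A) (hb : b ∈ B) (hc : c ∈ A) (hd : d ∈ B) :
    (a⁻¹ * b⁻¹ * a * b) * (c⁻¹ * d⁻¹ * c * d)
      = (c⁻¹ * d⁻¹ * c * d) * (a⁻¹ * b⁻¹ * a * b) := by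
  have hG' := skew_hG' A B hG
  obtain ⟨b₁, hb₁, P1⟩ := skew_rule1 A B hA hG (inv_mem hc) hb
  obtain ⟨a₁, ha₁, P2⟩ := skew_rule2 A B hB hG' (inv_mem hd) ha
  obtain ⟨b₂, hb₂, P3⟩ := skew_rule1 A B hA hG hc hb₁
  obtain ⟨a₂, ha₂, P4⟩ := skew_rule2 A B hB hG' hd ha₁
  simp only [inv_inv] at P1 P2
  -- P1 : ∀ z ∈ A, c * (z⁻¹*b⁻¹*z*b) * c⁻¹ = z⁻¹*b₁⁻¹*z*b₁
  -- P2 : ∀ w ∈ B, d * (a⁻¹*w⁻¹*a*w) * d⁻¹ = a₁⁻¹*w⁻¹*a₁*w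
  -- P3 : ∀ z ∈ A, c⁻¹ * (z⁻¹*b₁⁻¹*z*b₁) * c = z⁻¹*b₂⁻¹*z*b₂
  -- P4 : ∀ w ∈ B, d⁻¹ * (a₁⁻¹*w⁻¹*a₁*w) * d = a₂⁻¹*w⁻¹*a₂*w
  have t1 : ∀ z ∈ A, z⁻¹ * b₂⁻¹ * z * b₂ = z⁻¹ * b⁻¹ * z * b := by
    intro z hz
    have e2 := P3 z hz
    rw [← P1 z hz] at e2
    rw [← e2]; group
  have t2 : ∀ w ∈ B, a₂⁻¹ * w⁻¹ * a₂ * w = a⁻¹ * w⁻¹ * a * w := by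
    intro w hw
    have e4 := P4 w hw
    rw [← P2 w hw] at e4
    rw [← e4]; group
  have key : (c⁻¹ * d⁻¹ * c * d)⁻¹ * (a⁻¹ * b⁻¹ * a * b) * (c⁻¹ * d⁻¹ * c * d)
      = a⁻¹ * b⁻¹ * a * b := by
    calc (c⁻¹ * d⁻¹ * c * d)⁻¹ * (a⁻¹ * b⁻¹ * a * b) * (c⁻¹ * d⁻¹ * c * d)
        = d⁻¹ * (c⁻¹ * (d * (c * (a⁻¹ * b⁻¹ * a * b) * c⁻¹) * d⁻¹) * c) * d := by group
      _ = d⁻¹ * (c⁻¹ * (d * (a⁻¹ * b₁⁻¹ * a * b₁) * d⁻¹) * c) * d := by rw [P1 a ha]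
      _ = d⁻¹ * (c⁻¹ * (a₁⁻¹ * b₁⁻¹ * a₁ * b₁) * c) * d := by rw [P2 b₁ hb₁]
      _ = d⁻¹ * (a₁⁻¹ * b₂⁻¹ * a₁ * b₂) * d := by rw [P3 a₁ ha₁]
      _ = a₂⁻¹ * b₂⁻¹ * a₂ * b₂ := P4 b₂ hb₂
      _ = a₂⁻¹ * b⁻¹ * a₂ * b := t1 a₂ ha₂
      _ = a⁻¹ * b⁻¹ * a * b := t2 b hb
  calc (a⁻¹ * b⁻¹ * a * b) * (c⁻¹ * d⁻¹ * c * d)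
      = (c⁻¹ * d⁻¹ * c * d) *
          ((c⁻¹ * d⁻¹ * c * d)⁻¹ * (a⁻¹ * b⁻¹ * a * b) * (c⁻¹ * d⁻¹ * c * d)) := by group
    _ = (c⁻¹ * d⁻¹ * c * d) * (a⁻¹ * b⁻¹ * a * b) := by rw [key]

end Ito

section Abstract

variable {G : Type*} [Group G]

/-- The set of basic commutators. -/
private def skewS (A B : Subgroup G) : Set G :=
  {g | ∃ a ∈ A, ∃ b ∈ B, g = a⁻¹ * b⁻¹ * a * b}

private lemma skewS_comm {A B : Subgroup G}
    (hA : ∀ a ∈ A, ∀ a' ∈ A, a * a' = a' * a)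
    (hB : ∀ b ∈ B, ∀ b' ∈ B, b * b' = b' * b)
    (hG : ∀ g : G, ∃ a ∈ A, ∃ b ∈ B, a * b = g) :
    ∀ s ∈ skewS A B, ∀ t ∈ skewS A B, s * t = t * s := by
  rintro s ⟨a, ha, b, hb, rfl⟩ t ⟨c, hc, d, hd, rfl⟩
  exact skew_Scomm A B hA hB hG ha hb hc hd

private lemma skewN_comm {A B : Subgroup G}
    (hA : ∀ a ∈ A, ∀ a' ∈ A, a * a' = a' * a)
    (hB : ∀ b ∈ B, ∀ b' ∈ B, b * b' = b' * b)
    (hG : ∀ g : G, ∃ a ∈ A, ∃ b ∈ B, a * b = g) :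
    ∀ g ∈ closure (skewS A B), ∀ h ∈ closure (skewS A B), g * h = h * g := by
  have hS := skewS_comm hA hB hG
  have step1 : ∀ s ∈ skewS A B, ∀ h ∈ closure (skewS A B), s * h = h * s := by
    intro s hs h hh
    have hle : closure (skewS A B) ≤ centralizer {s} := by
      refine (closure_le _).mpr ?_
      intro t ht
      refine mem_centralizer_iff.mpr ?_
      intro z hz
      rw [Set.mem_singleton_iff] at hz
      rw [hz]
      exact hS s hs t ht
    exact mem_centralizer_iff.mp (hle hh) s rfl
  intro g hg h hh
  have hle : closure (skewS A B) ≤ centralizer {h} := by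
    refine (closure_le _).mpr ?_
    intro t ht
    refine mem_centralizer_iff.mpr ?_
    intro z hz
    rw [Set.mem_singleton_iff] at hz
    rw [hz]
    exact (step1 t ht h hh).symm
  exact (mem_centralizer_iff.mp (hle hg) h rfl).symm

private lemma skewS_conj {A B : Subgroup G}
    (hA : ∀ a ∈ A, ∀ a' ∈ A, a * a' = a' * a)
    (hB : ∀ b ∈ B, ∀ b' ∈ B, b * b' = b' * b)
    (hG : ∀ g : G, ∃ a ∈ A, ∃ b ∈ B, a * b = g) :
    ∀ g : G, ∀ s ∈ skewS A B, g⁻¹ * s * g ∈ skewS A B := by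
  have hG' := skew_hG' A B hG
  rintro g s ⟨a, ha, b, hb, rfl⟩
  obtain ⟨p, hp, q, hq, hpq⟩ := hG g
  obtain ⟨b', hb', P1⟩ := skew_rule1 A B hA hG hp hb
  obtain ⟨a', ha', P2⟩ := skew_rule2 A B hB hG' hq ha
  have key : g⁻¹ * (a⁻¹ * b⁻¹ * a * b) * g
      = q⁻¹ * (p⁻¹ * (a⁻¹ * b⁻¹ * a * b) * p) * q := by rw [← hpq]; group
  rw [key, P1 a ha, P2 b' hb']
  exact ⟨a', ha', b', hb', rfl⟩

private lemma skewN_normal {A B : Subgroup G}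
    (hA : ∀ a ∈ A, ∀ a' ∈ A, a * a' = a' * a)
    (hB : ∀ b ∈ B, ∀ b' ∈ B, b * b' = b' * b)
    (hG : ∀ g : G, ∃ a ∈ A, ∃ b ∈ B, a * b = g) :
    (closure (skewS A B)).Normal := by
  constructor
  intro nn hn g
  have hmap : (closure (skewS A B)).map (MulAut.conj g).toMonoidHom ≤ closure (skewS A B) := by
    rw [MonoidHom.map_closure]
    refine closure_le _ |>.mpr ?_
    rintro t ⟨s, hs, rfl⟩
    have : (MulAut.conj g).toMonoidHom s = (g⁻¹)⁻¹ * s * g⁻¹ := by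
      simp [MulAut.conj_apply]
    rw [this]
    exact subset_closure (skewS_conj hA hB hG g⁻¹ s hs)
  exact hmap ⟨nn, hn, by simp [MulAut.conj_apply]⟩

private lemma skew_comm_mem_N {A B : Subgroup G}
    (hA : ∀ a ∈ A, ∀ a' ∈ A, a * a' = a' * a)
    (hB : ∀ b ∈ B, ∀ b' ∈ B, b * b' = b' * b)
    (hG : ∀ g : G, ∃ a ∈ A, ∃ b ∈ B, a * b = g) :
    ∀ g h : G, g * h * g⁻¹ * h⁻¹ ∈ closure (skewS A B) := by
  haveI hNn : (closure (skewS A B)).Normal := skewN_normal hA hB hG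
  set N := closure (skewS A B) with hN
  let φ : G →* G ⧸ N := QuotientGroup.mk' N
  have hcommAB : ∀ a ∈ A, ∀ b ∈ B, φ a * φ b = φ b * φ a := by
    intro a ha b hb
    have h1 : (φ a)⁻¹ * (φ b)⁻¹ * φ a * φ b = 1 := by
      rw [← map_inv, ← map_inv, ← map_mul, ← map_mul, ← map_mul]
      refine (QuotientGroup.eq_one_iff _).mpr ?_
      exact subset_closure ⟨a, ha, b, hb, rfl⟩
    have h2 : φ b * φ a * ((φ a)⁻¹ * (φ b)⁻¹ * φ a * φ b) = φ b * φ a := by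
      rw [h1, mul_one]
    calc φ a * φ b = φ b * φ a * ((φ a)⁻¹ * (φ b)⁻¹ * φ a * φ b) := by group
      _ = φ b * φ a := h2
  have hcomm : ∀ u v : G, φ u * φ v = φ v * φ u := by
    intro u v
    obtain ⟨a, ha, b, hb, huv⟩ := hG u
    obtain ⟨a', ha', b', hb', huv'⟩ := hG v
    have e1 : φ a * φ a' = φ a' * φ a := by
      rw [← map_mul, ← map_mul, hA a ha a' ha']
    have e2 : φ b * φ b' = φ b' * φ b := by
      rw [← map_mul, ← map_mul, hB b hb b' hb']
    have e3 := hcommAB a ha b' hb'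
    have e4 := hcommAB a' ha' b hb
    rw [← huv, ← huv', map_mul, map_mul]
    calc φ a * φ b * (φ a' * φ b')
        = φ a * (φ b * φ a') * φ b' := by group
      _ = φ a * (φ a' * φ b) * φ b' := by rw [e4]
      _ = (φ a * φ a') * (φ b * φ b') := by group
      _ = (φ a' * φ a) * (φ b' * φ b) := by rw [e1, e2]
      _ = φ a' * (φ a * φ b') * φ b := by group
      _ = φ a' * (φ b' * φ a) * φ b := by rw [e3]
      _ = φ a' * φ b' * (φ a * φ b) := by group
  intro g h
  have h1 : φ (g * h * g⁻¹ * h⁻¹) = 1 := by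
    rw [map_mul, map_mul, map_mul, map_inv, map_inv]
    rw [hcomm g h]
    group
  exact (QuotientGroup.eq_one_iff _).mp h1

/-- If `K` is normal, then `|K ⊔ W|` divides `|K| * |W|`. -/
private lemma card_sup_dvd [Finite G] (K W : Subgroup G) (hK : K.Normal) :
    Nat.card ↥(K ⊔ W) ∣ Nat.card K * Nat.card W := by
  haveI : (K.subgroupOf (K ⊔ W)).Normal := hK.subgroupOf (K ⊔ W)
  have h1 : Nat.card (K.subgroupOf (K ⊔ W)) * (K.subgroupOf (K ⊔ W)).index
      = Nat.card ↥(K ⊔ W) := Subgroup.card_mul_index _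
  have h2 : Nat.card (K.subgroupOf (K ⊔ W)) = Nat.card K :=
    Nat.card_congr (subgroupOfEquivOfLe le_sup_left).toEquiv
  let φ : ↥W →* ↥(K ⊔ W) ⧸ (K.subgroupOf (K ⊔ W)) :=
    (QuotientGroup.mk' _).comp (inclusion le_sup_right)
  have hφ : Function.Surjective φ := by
    intro q
    induction q using QuotientGroup.induction_on with
    | H j =>
      have hj : (j : G) ∈ (K : Set G) * (W : Set G) := by
        rw [← Subgroup.normal_mul]; exact j.2
      obtain ⟨k, hk, w, hw, hkw⟩ := hj
      refine ⟨⟨w, hw⟩, ?_⟩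
      show QuotientGroup.mk _ = QuotientGroup.mk j
      refine QuotientGroup.eq.mpr ?_
      rw [mem_subgroupOf]
      show ((inclusion (le_sup_right : W ≤ K ⊔ W) ⟨w, hw⟩ : ↥(K ⊔ W)) : G)⁻¹ * (j : G) ∈ K
      have : ((inclusion (le_sup_right : W ≤ K ⊔ W) ⟨w, hw⟩ : ↥(K ⊔ W)) : G) = w := rfl
      rw [this, ← hkw]
      have : w⁻¹ * (k * w) = w⁻¹ * k * (w⁻¹)⁻¹ := by group
      rw [this]
      exact hK.conj_mem k hk w⁻¹
  have h3 : (K.subgroupOf (K ⊔ W)).index ∣ Nat.card W := by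
    rw [Subgroup.index_eq_card]
    exact Subgroup.card_dvd_of_surjective φ hφ
  calc Nat.card ↥(K ⊔ W) = Nat.card K * (K.subgroupOf (K ⊔ W)).index := by rw [← h1, h2]
    _ ∣ Nat.card K * Nat.card W := mul_dvd_mul_left _ h3

/-- Main abstract theorem: in a finite group which is the product of two abelian
subgroups of coprime orders, with the second having trivial normal core, the first
subgroup is normal. -/
private theorem skew_abstract_normal [Finite G] (A C : Subgroup G)
    (hA : ∀ a ∈ A, ∀ a' ∈ A, a * a' = a' * a)
    (hC : ∀ c ∈ C, ∀ c' ∈ C, c * c' = c' * c)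
    (hG : ∀ g : G, ∃ a ∈ A, ∃ c ∈ C, a * c = g)
    (hcop : Nat.Coprime (Nat.card A) (Nat.card C))
    (hcore : ∀ N' : Subgroup G, N'.Normal → N' ≤ C → N' = ⊥)
    {g a : G} (ha : a ∈ A) : g * a * g⁻¹ ∈ A := by
  have hposA : 0 < Nat.card A := Nat.card_pos
  have hposC : 0 < Nat.card C := Nat.card_pos
  have hposG : 0 < Nat.card G := Nat.card_pos
  -- |G| = |A| * |C|
  have hsurj : Function.Surjective (fun p : ↥A × ↥C => (p.1 : G) * (p.2 : G)) := by
    intro x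
    obtain ⟨a', ha', c', hc', h⟩ := hG x
    exact ⟨(⟨a', ha'⟩, ⟨c', hc'⟩), h⟩
  have hGle : Nat.card G ≤ Nat.card A * Nat.card C := by
    have := Nat.card_le_card_of_surjective _ hsurj
    rwa [Nat.card_prod] at this
  have hdvd : Nat.card A * Nat.card C ∣ Nat.card G :=
    hcop.mul_dvd_of_dvd_of_dvd (card_subgroup_dvd_card A) (card_subgroup_dvd_card C)
  have hcard : Nat.card G = Nat.card A * Nat.card C :=
    le_antisymm hGle (Nat.le_of_dvd hposG hdvd)
  -- the abelian normal subgroup N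
  set N : Subgroup G := closure (skewS A C) with hNdef
  haveI hNn : N.Normal := skewN_normal hA hC hG
  have hNcomm := skewN_comm hA hC hG
  -- Q : elements of N of order coprime to |A|
  set Q : Subgroup G :=
    { carrier := {x | x ∈ N ∧ Nat.Coprime (orderOf x) (Nat.card A)}
      one_mem' := ⟨N.one_mem, by simp⟩
      mul_mem' := by
        rintro x y ⟨hxN, hx⟩ ⟨hyN, hy⟩
        refine ⟨N.mul_mem hxN hyN, ?_⟩
        have hcomm : Commute x y := hNcomm x hxN y hyN
        exact Nat.Coprime.coprime_dvd_left
          (hcomm.orderOf_mul_dvd_lcm.trans (Nat.lcm_dvd_mul _ _)) (hx.mul hy)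
      inv_mem' := by
        rintro x ⟨hxN, hx⟩
        exact ⟨N.inv_mem hxN, by rwa [orderOf_inv]⟩ } with hQdef
  have hQmem : ∀ x : G, x ∈ Q ↔ x ∈ N ∧ Nat.Coprime (orderOf x) (Nat.card A) := fun _ => Iff.rfl
  haveI hQn : Q.Normal := by
    constructor
    intro x hx g'
    rw [hQmem] at hx ⊢
    refine ⟨hNn.conj_mem x hx.1 g', ?_⟩
    have hsc : SemiconjBy g' x (g' * x * g'⁻¹) := by
      show g' * x = g' * x * g'⁻¹ * g'
      group
    rw [← hsc.orderOf_eq]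
    exact hx.2
  -- Q has order coprime to |A|
  have hQA : Nat.Coprime (Nat.card Q) (Nat.card A) := by
    by_contra h
    obtain ⟨p, hp, hp1, hp2⟩ := Nat.Prime.not_coprime_iff_dvd.mp h
    haveI : Fact p.Prime := ⟨hp⟩
    obtain ⟨x, hx⟩ := exists_prime_orderOf_dvd_card' (G := ↥Q) p hp1
    have hxQ := x.2
    rw [hQmem] at hxQ
    have : orderOf (x : G) = p := by rw [Subgroup.orderOf_coe, hx]
    have hcop_p : Nat.Coprime p (Nat.card A) := this ▸ hxQ.2
    have hpd : p ∣ 1 := by rw [← hcop_p]; exact Nat.dvd_gcd dvd_rfl hp2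
    exact hp.one_lt.ne' (Nat.dvd_one.mp hpd)
  -- Q ≤ C, hence Q = ⊥
  have hQbot : Q = ⊥ := by
    have hDd : Nat.card ↥(Q ⊔ C) ∣ Nat.card Q * Nat.card C := card_sup_dvd Q C hQn
    have h5 : Nat.card (C.subgroupOf (Q ⊔ C)) = Nat.card C :=
      Nat.card_congr (subgroupOfEquivOfLe le_sup_right).toEquiv
    have h6 : Nat.card C * (C.subgroupOf (Q ⊔ C)).index = Nat.card ↥(Q ⊔ C) := by
      rw [← h5]; exact Subgroup.card_mul_index _
    have hr1 : (C.subgroupOf (Q ⊔ C)).index ∣ Nat.card Q := by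
      have hstep : Nat.card C * (C.subgroupOf (Q ⊔ C)).index ∣ Nat.card C * Nat.card Q := by
        rw [h6, mul_comm (Nat.card C) (Nat.card Q)]
        exact hDd
      exact (Nat.mul_dvd_mul_iff_left hposC).mp hstep
    have hCi : C.index = Nat.card A := by
      have h7 := Subgroup.card_mul_index C
      rw [hcard, mul_comm (Nat.card A) (Nat.card C)] at h7
      exact Nat.eq_of_mul_eq_mul_left hposC h7
    have hr2 : (C.subgroupOf (Q ⊔ C)).index ∣ Nat.card A := by
      rw [← hCi]
      exact relIndex_dvd_index_of_le le_sup_right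
    have hr' : (C.subgroupOf (Q ⊔ C)).index ∣ 1 := by
      rw [← hQA]; exact Nat.dvd_gcd hr1 hr2
    have hr : C.relIndex (Q ⊔ C) = 1 := Nat.dvd_one.mp hr'
    have hDC : Q ⊔ C ≤ C := relIndex_eq_one.mp hr
    exact hcore Q hQn (le_trans le_sup_left hDC)
  -- |N| is coprime to |C|
  have hNC : Nat.Coprime (Nat.card N) (Nat.card C) := by
    by_contra h
    obtain ⟨p, hp, hpN, hpC⟩ := Nat.Prime.not_coprime_iff_dvd.mp h
    haveI : Fact p.Prime := ⟨hp⟩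
    obtain ⟨x, hx⟩ := exists_prime_orderOf_dvd_card' (G := ↥N) p hpN
    have hordx : orderOf (x : G) = p := by rw [Subgroup.orderOf_coe, hx]
    have hxQ : (x : G) ∈ Q := by
      rw [hQmem]
      refine ⟨x.2, ?_⟩
      rw [hordx]
      exact (hcop.symm.coprime_dvd_left hpC)
    rw [hQbot, Subgroup.mem_bot] at hxQ
    rw [hxQ, orderOf_one] at hordx
    exact hp.one_lt.ne' hordx.symm
  -- N ≤ A
  have hNA : N ≤ A := by
    have hH : Nat.card ↥(N ⊔ A) ∣ Nat.card N * Nat.card A := card_sup_dvd N A hNn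
    have hHC : Nat.Coprime (Nat.card ↥(N ⊔ A)) (Nat.card C) :=
      Nat.Coprime.coprime_dvd_left hH (hNC.mul hcop)
    have hHG : Nat.card ↥(N ⊔ A) ∣ Nat.card A * Nat.card C := by
      rw [← hcard]; exact card_subgroup_dvd_card _
    have hHA : Nat.card ↥(N ⊔ A) ∣ Nat.card A :=
      (Nat.Coprime.dvd_of_dvd_mul_right hHC hHG)
    have hle : Nat.card ↥(N ⊔ A) ≤ Nat.card A := Nat.le_of_dvd hposA hHA
    have hEq : A = N ⊔ A := Subgroup.eq_of_le_of_card_ge le_sup_right hle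
    rw [hEq]
    exact le_sup_left
  -- conclude
  have hw : g * a * g⁻¹ * a⁻¹ ∈ N := skew_comm_mem_N hA hC hG g a
  have := A.mul_mem (hNA hw) ha
  have heq : g * a * g⁻¹ * a⁻¹ * a = g * a * g⁻¹ := by group
  rwa [heq] at this

end Abstract

section Concrete

variable {n : ℕ}

/-- The subgroup of translations of `ZMod n`. -/
private def Atrans (n : ℕ) : Subgroup (Equiv.Perm (ZMod n)) where
  carrier := Set.range (fun a : ZMod n => Equiv.addLeft a)
  one_mem' := ⟨0, by simp⟩
  mul_mem' := by
    rintro _ _ ⟨a, rfl⟩ ⟨b, rfl⟩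
    exact ⟨a + b, by simp⟩
  inv_mem' := by
    rintro _ ⟨a, rfl⟩
    exact ⟨-a, by simp⟩

private lemma mem_Atrans {g : Equiv.Perm (ZMod n)} :
    g ∈ Atrans n ↔ ∃ a : ZMod n, Equiv.addLeft a = g := Iff.rfl

private lemma addLeft_injective :
    Function.Injective (fun a : ZMod n => Equiv.addLeft a) := by
  intro a b h
  have := congrArg (fun e : Equiv.Perm (ZMod n) => e 0) h
  simpa using this

private lemma card_Atrans : Nat.card (Atrans n) = n := by
  have h1 : Nat.card (Atrans n) = Nat.card (ZMod n) :=
    Nat.card_range_of_injective (addLeft_injective (n := n))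
  rw [h1, Nat.card_zmod]

/-- Reduction of integer powers of a finite-order permutation to natural powers. -/
private lemma zpow_to_pow [NeZero n] (f : Equiv.Perm (ZMod n)) (z : ℤ) :
    ∃ j : ℕ, f ^ z = f ^ j := by
  refine ⟨(z % (orderOf f : ℤ)).toNat, ?_⟩
  have hm : 0 < orderOf f := orderOf_pos f
  have hnn : 0 ≤ z % (orderOf f : ℤ) := Int.emod_nonneg z (by exact_mod_cast hm.ne')
  rw [← zpow_natCast, Int.toNat_of_nonneg hnn, zpow_mod_orderOf]

/-- The set of products `addLeft x * f^j` is a subgroup. -/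
private def formSub (f : Equiv.Perm (ZMod n))
    (hconj : ∀ (k : ℕ) (x : ZMod n), ∃ c : ℕ,
      f ^ k * Equiv.addLeft x = Equiv.addLeft ((f ^ k) x) * f ^ c)
    (hzred : ∀ z : ℤ, ∃ j : ℕ, f ^ z = f ^ j) : Subgroup (Equiv.Perm (ZMod n)) where
  carrier := {g | ∃ (x : ZMod n) (j : ℕ), g = Equiv.addLeft x * f ^ j}
  one_mem' := ⟨0, 0, by simp⟩
  mul_mem' := by
    rintro g h ⟨x, k, rfl⟩ ⟨y, j, rfl⟩
    obtain ⟨c, hc⟩ := hconj k y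
    refine ⟨x + (f ^ k) y, c + j, ?_⟩
    calc Equiv.addLeft x * f ^ k * (Equiv.addLeft y * f ^ j)
        = Equiv.addLeft x * (f ^ k * Equiv.addLeft y) * f ^ j := by
          simp [mul_assoc]
      _ = Equiv.addLeft x * (Equiv.addLeft ((f ^ k) y) * f ^ c) * f ^ j := by rw [hc]
      _ = Equiv.addLeft (x + (f ^ k) y) * f ^ (c + j) := by
          simp [pow_add, mul_assoc]
  inv_mem' := by
    rintro g ⟨x, k, rfl⟩
    obtain ⟨k', hk'⟩ := hzred (-(k : ℤ))
    obtain ⟨c, hc⟩ := hconj k' (-x)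
    refine ⟨(f ^ k') (-x), c, ?_⟩
    calc (Equiv.addLeft x * f ^ k)⁻¹
        = (f ^ k)⁻¹ * Equiv.addLeft (-x) := by rw [mul_inv_rev, Equiv.neg_addLeft]
      _ = f ^ k' * Equiv.addLeft (-x) := by
          rw [← hk', zpow_neg, zpow_natCast]
      _ = Equiv.addLeft ((f ^ k') (-x)) * f ^ c := hc

end Concrete

/-- A bijection `f` of `ℤ/nℤ` is a skew-morphism if `f 0 = 0` and there is a
power function `π` with `f (x+y) = f x + f^(π x) y` for all `x, y`. -/
def IsSkewMorphism {n : ℕ} (f : Equiv.Perm (ZMod n)) : Prop :=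
  f 0 = 0 ∧ ∃ π : ZMod n → ℤ, ∀ x y : ZMod n, f (x + y) = f x + (f ^ π x) y

/-- If a skew-morphism of `ℤ/nℤ` has order coprime to `n`, then it is an
automorphism, i.e. it is additive. -/
theorem stmt_5 (n : ℕ) (hn : 0 < n) (f : Equiv.Perm (ZMod n))
    (hf : IsSkewMorphism f) (hcop : Nat.Coprime (orderOf f) n) :
    ∀ x y : ZMod n, f (x + y) = f x + f y := by
  haveI : NeZero n := ⟨hn.ne'⟩
  obtain ⟨hf0, π, hπ⟩ := hf
  -- the basic conjugation relation coming from the skew-morphism identity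
  have hbase : ∀ x : ZMod n, f * Equiv.addLeft x = Equiv.addLeft (f x) * f ^ π x := by
    intro x
    ext y
    simp [Equiv.Perm.mul_apply, hπ x y]
  have hzred : ∀ z : ℤ, ∃ j : ℕ, f ^ z = f ^ j := zpow_to_pow f
  -- conjugation of translations by natural powers of f
  have hconj : ∀ (k : ℕ) (x : ZMod n), ∃ c : ℕ,
      f ^ k * Equiv.addLeft x = Equiv.addLeft ((f ^ k) x) * f ^ c := by
    intro k
    induction k with
    | zero => intro x; exact ⟨0, by simp⟩
    | succ k ih =>
      intro x
      obtain ⟨c, hc⟩ := ih x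
      obtain ⟨j, hj⟩ := hzred (π ((f ^ k) x))
      refine ⟨j + c, ?_⟩
      have happ : (f ^ (k + 1)) x = f ((f ^ k) x) := by
        rw [pow_succ']; rfl
      calc f ^ (k + 1) * Equiv.addLeft x = f * (f ^ k * Equiv.addLeft x) := by
            rw [pow_succ', mul_assoc]
        _ = f * (Equiv.addLeft ((f ^ k) x) * f ^ c) := by rw [hc]
        _ = (f * Equiv.addLeft ((f ^ k) x)) * f ^ c := by rw [mul_assoc]
        _ = (Equiv.addLeft (f ((f ^ k) x)) * f ^ π ((f ^ k) x)) * f ^ c := by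
            rw [hbase]
        _ = Equiv.addLeft ((f ^ (k + 1)) x) * f ^ (j + c) := by
            rw [hj, ← happ, pow_add f j c, mul_assoc]
  -- natural powers of f fix 0
  have hfix : ∀ j : ℕ, (f ^ j) 0 = (0 : ZMod n) := by
    intro j
    induction j with
    | zero => simp
    | succ k ih =>
      rw [pow_succ']
      show f ((f ^ k) 0) = 0
      rw [ih, hf0]
  -- the ambient group G₀ = A ⊔ C
  have hfG₀ : f ∈ Atrans n ⊔ Subgroup.zpowers f :=
    Subgroup.mem_sup_right (Subgroup.mem_zpowers f)
  have hform : ∀ g ∈ Atrans n ⊔ Subgroup.zpowers f,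
      ∃ (x : ZMod n) (j : ℕ), g = Equiv.addLeft x * f ^ j := by
    have hle : Atrans n ⊔ Subgroup.zpowers f ≤ formSub f hconj hzred := by
      refine sup_le ?_ ?_
      · rintro g ⟨a, rfl⟩
        exact ⟨a, 0, by simp⟩
      · intro g hg
        obtain ⟨z, hz⟩ := Subgroup.mem_zpowers_iff.mp hg
        obtain ⟨j, hj⟩ := hzred z
        exact ⟨0, j, by rw [← hz, hj]; simp⟩
    intro g hg
    exact hle hg
  have hAcomm : ∀ a ∈ Atrans n, ∀ a' ∈ Atrans n, a * a' = a' * a := by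
    rintro _ ⟨a, rfl⟩ _ ⟨b, rfl⟩
    rw [← Equiv.addLeft_add, ← Equiv.addLeft_add, add_comm]
  have hCcomm : ∀ c ∈ Subgroup.zpowers f, ∀ c' ∈ Subgroup.zpowers f,
      c * c' = c' * c := by
    intro c hc c' hc'
    obtain ⟨z, hz⟩ := Subgroup.mem_zpowers_iff.mp hc
    obtain ⟨w, hw⟩ := Subgroup.mem_zpowers_iff.mp hc'
    rw [← hz, ← hw, ← zpow_add, ← zpow_add, add_comm]
  -- hypotheses for the abstract theorem, inside the subtype
  have hA'comm : ∀ a ∈ (Atrans n).subgroupOf (Atrans n ⊔ Subgroup.zpowers f),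
      ∀ a' ∈ (Atrans n).subgroupOf (Atrans n ⊔ Subgroup.zpowers f), a * a' = a' * a := by
    intro a ha a' ha'
    rw [Subgroup.mem_subgroupOf] at ha ha'
    exact Subtype.ext (hAcomm _ ha _ ha')
  have hC'comm : ∀ c ∈ (Subgroup.zpowers f).subgroupOf (Atrans n ⊔ Subgroup.zpowers f),
      ∀ c' ∈ (Subgroup.zpowers f).subgroupOf (Atrans n ⊔ Subgroup.zpowers f),
      c * c' = c' * c := by
    intro c hc c' hc'
    rw [Subgroup.mem_subgroupOf] at hc hc'
    exact Subtype.ext (hCcomm _ hc _ hc')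
  have hdec : ∀ g : ↥(Atrans n ⊔ Subgroup.zpowers f),
      ∃ a ∈ (Atrans n).subgroupOf (Atrans n ⊔ Subgroup.zpowers f),
      ∃ c ∈ (Subgroup.zpowers f).subgroupOf (Atrans n ⊔ Subgroup.zpowers f), a * c = g := by
    intro g
    obtain ⟨x, j, hxj⟩ := hform g.1 g.2
    have hxA : Equiv.addLeft x ∈ Atrans n := ⟨x, rfl⟩
    have hjC : f ^ j ∈ Subgroup.zpowers f :=
      Subgroup.mem_zpowers_iff.mpr ⟨(j : ℤ), by rw [zpow_natCast]⟩
    refine ⟨⟨Equiv.addLeft x, Subgroup.mem_sup_left hxA⟩, Subgroup.mem_subgroupOf.mpr hxA,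
      ⟨f ^ j, Subgroup.mem_sup_right hjC⟩, Subgroup.mem_subgroupOf.mpr hjC, ?_⟩
    exact Subtype.ext hxj.symm
  have hcards_A : Nat.card ((Atrans n).subgroupOf (Atrans n ⊔ Subgroup.zpowers f)) = n := by
    have h := Nat.card_congr
      (Subgroup.subgroupOfEquivOfLe (le_sup_left : Atrans n ≤ Atrans n ⊔ Subgroup.zpowers f)).toEquiv
    rw [h, card_Atrans]
  have hcards_C : Nat.card ((Subgroup.zpowers f).subgroupOf (Atrans n ⊔ Subgroup.zpowers f))
      = orderOf f := by
    have h := Nat.card_congr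
      (Subgroup.subgroupOfEquivOfLe
        (le_sup_right : Subgroup.zpowers f ≤ Atrans n ⊔ Subgroup.zpowers f)).toEquiv
    rw [h, Nat.card_zpowers]
  have hcop' : Nat.Coprime
      (Nat.card ((Atrans n).subgroupOf (Atrans n ⊔ Subgroup.zpowers f)))
      (Nat.card ((Subgroup.zpowers f).subgroupOf (Atrans n ⊔ Subgroup.zpowers f))) := by
    rw [hcards_A, hcards_C]
    exact hcop.symm
  have hcore : ∀ N' : Subgroup ↥(Atrans n ⊔ Subgroup.zpowers f), N'.Normal →
      N' ≤ (Subgroup.zpowers f).subgroupOf (Atrans n ⊔ Subgroup.zpowers f) → N' = ⊥ := by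
    intro N' hNn hNC
    rw [Subgroup.eq_bot_iff_forall]
    intro g hg
    have hgfix : ∀ u : ZMod n, (g : Equiv.Perm (ZMod n)) u = u := by
      intro u
      have hxA : Equiv.addLeft (-u) ∈ Atrans n := ⟨-u, rfl⟩
      have ht : (⟨Equiv.addLeft (-u), Subgroup.mem_sup_left hxA⟩ : ↥(Atrans n ⊔ Subgroup.zpowers f))
          * g * (⟨Equiv.addLeft (-u), Subgroup.mem_sup_left hxA⟩ :
            ↥(Atrans n ⊔ Subgroup.zpowers f))⁻¹ ∈ N' :=
        hNn.conj_mem g hg _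
      have h2 : Equiv.addLeft (-u) * (g : Equiv.Perm (ZMod n)) * (Equiv.addLeft (-u))⁻¹
          ∈ Subgroup.zpowers f := Subgroup.mem_subgroupOf.mp (hNC ht)
      obtain ⟨w, hw⟩ := Subgroup.mem_zpowers_iff.mp h2
      obtain ⟨jw, hjw⟩ := hzred w
      have hL : (f ^ w) (0 : ZMod n) = 0 := by rw [hjw]; exact hfix jw
      rw [hw] at hL
      have hR : (Equiv.addLeft (-u) * (g : Equiv.Perm (ZMod n)) * (Equiv.addLeft (-u))⁻¹)
          (0 : ZMod n) = -u + (g : Equiv.Perm (ZMod n)) u := by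
        simp [Equiv.Perm.mul_apply]
      rw [hR] at hL
      -- hL : -u + g u = 0
      have h3 : (g : Equiv.Perm (ZMod n)) u = -(-u) := eq_neg_of_add_eq_zero_right hL
      rwa [neg_neg] at h3
    have hg1 : (g : Equiv.Perm (ZMod n)) = 1 := by
      ext u
      simpa using hgfix u
    exact Subtype.ext hg1
  -- apply the abstract theorem
  have hmain := fun (x : ZMod n) (hxA : Equiv.addLeft x ∈ Atrans n) =>
    skew_abstract_normal
      ((Atrans n).subgroupOf (Atrans n ⊔ Subgroup.zpowers f))
      ((Subgroup.zpowers f).subgroupOf (Atrans n ⊔ Subgroup.zpowers f))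
      hA'comm hC'comm hdec hcop' hcore
      (g := ⟨f, hfG₀⟩)
      (a := ⟨Equiv.addLeft x, Subgroup.mem_sup_left hxA⟩)
      (Subgroup.mem_subgroupOf.mpr hxA)
  intro x y
  have hxA : Equiv.addLeft x ∈ Atrans n := ⟨x, rfl⟩
  have hval : f * Equiv.addLeft x * f⁻¹ ∈ Atrans n :=
    Subgroup.mem_subgroupOf.mp (hmain x hxA)
  obtain ⟨u, hu⟩ := mem_Atrans.mp hval
  have heq : Equiv.addLeft u * f = f * Equiv.addLeft x := by
    rw [hu]; group
  have h1 := congrArg (fun e : Equiv.Perm (ZMod n) => e y) heq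
  have h0 := congrArg (fun e : Equiv.Perm (ZMod n) => e 0) heq
  simp only [Equiv.Perm.mul_apply, Equiv.coe_addLeft] at h1 h0
  -- h0 : u + f 0 = f (x + 0), h1 : u + f y = f (x + y)
  rw [hf0, add_zero, add_zero] at h0
  -- h0 : u = f x
  rw [← h1, h0]
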